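/- For any vertex α of BH_n, the vertices α and its shadow vertex α^s have exactly the same set of neighbors: N(α) = N(α^s). -/
import Mathlib


/-- `(-1)^{a}` in `ZMod 4`: `+1` if `a` is even, `-1` if `a` is odd. -/
def bhSign (a : ZMod 4) : ZMod 4 := if a.val % 2 = 0 then 1 else -1

/-- The move `α ↦ α^{i±}` in `BH_n`: for `i = 0`, change coordinate `0` by `ε = ±1`;
for `i ≠ 0`, change coordinate `0` by `ε = ±1` and coordinate `i` by `(-1)^{α_0}`. -/
def bhMove (n : ℕ) [NeZero n] (i : Fin n) (ε : ZMod 4) (α : Fin n → ZMod 4) :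
    Fin n → ZMod 4 :=
  if i = 0 then Function.update α 0 (α 0 + ε)
  else Function.update (Function.update α 0 (α 0 + ε)) i (α i + bhSign (α 0))

/-- `β` is one of the `2n` designated neighbours of `α` in `BH_n`. -/
def bhAdj (n : ℕ) [NeZero n] (α β : Fin n → ZMod 4) : Prop :=
  ∃ i : Fin n, ∃ ε : ZMod 4, (ε = 1 ∨ ε = -1) ∧ β = bhMove n i ε α

/-- The `n`-dimensional balanced hypercube as a simple graph. -/
def BH (n : ℕ) [NeZero n] : SimpleGraph (Fin n → ZMod 4) :=
  SimpleGraph.fromRel (bhAdj n)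

/-- The shadow vertex `α^s`: add `2 (mod 4)` to coordinate `0`. -/
def bhShadow (n : ℕ) [NeZero n] (α : Fin n → ZMod 4) : Fin n → ZMod 4 :=
  Function.update α 0 (α 0 + 2)


lemma bhSign_add_two (a : ZMod 4) : bhSign (a + 2) = bhSign a := by
  revert a; decide

lemma zmod4_add_two_two (a : ZMod 4) : a + 2 + 2 = a := by
  have h : (2 : ZMod 4) + 2 = 0 := by decide
  rw [add_assoc, h, add_zero]

lemma bhShadow_shadow (n : ℕ) [NeZero n] (α : Fin n → ZMod 4) :
    bhShadow n (bhShadow n α) = α := by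
  simp [bhShadow, Function.update_idem, zmod4_add_two_two]

lemma bhMove_apply_zero (n : ℕ) [NeZero n] (i : Fin n) (ε : ZMod 4)
    (α : Fin n → ZMod 4) : bhMove n i ε α 0 = α 0 + ε := by
  unfold bhMove
  split
  · simp
  · rename_i hi
    rw [Function.update_of_ne (Ne.symm hi), Function.update_self]

lemma bhMove_shadow (n : ℕ) [NeZero n] (i : Fin n) (ε : ZMod 4)
    (hε : ε = 1 ∨ ε = -1) (α : Fin n → ZMod 4) :
    bhMove n i (-ε) (bhShadow n α) = bhMove n i ε α := by
  have h0 : bhShadow n α 0 = α 0 + 2 := by simp [bhShadow]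
  have hA : α 0 + 2 + -ε = α 0 + ε := by
    rw [add_assoc]; congr 1
    rcases hε with rfl | rfl <;> decide
  unfold bhMove
  by_cases hi : i = 0
  · simp [hi, bhShadow, Function.update_idem, hA]
  · simp only [hi, if_neg]
    rw [h0, hA, bhSign_add_two]
    congr 1
    · simp [bhShadow, Function.update_idem]
    · simp [bhShadow, Function.update_of_ne hi]

lemma bhShadow_move (n : ℕ) [NeZero n] (i : Fin n) (ε : ZMod 4)
    (hε : ε = 1 ∨ ε = -1) (β : Fin n → ZMod 4) :
    bhShadow n (bhMove n i ε β) = bhMove n i (-ε) β := by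
  have hA : β 0 + ε + 2 = β 0 + -ε := by
    rw [add_assoc]; congr 1
    rcases hε with rfl | rfl <;> decide
  unfold bhShadow
  rw [bhMove_apply_zero, hA]
  unfold bhMove
  by_cases hi : i = 0
  · simp only [hi, ite_true]
    rw [Function.update_idem]
  · simp only [hi, ite_false]
    rw [Function.update_comm hi, Function.update_idem]

lemma bhAdj_shadow_left {n : ℕ} [NeZero n] {α β : Fin n → ZMod 4}
    (h : bhAdj n α β) : bhAdj n (bhShadow n α) β := by
  obtain ⟨i, ε, hε, rfl⟩ := h
  refine ⟨i, -ε, ?_, (bhMove_shadow n i ε hε α).symm⟩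
  rcases hε with rfl | rfl
  · right; rfl
  · left; decide

lemma bhAdj_shadow_right {n : ℕ} [NeZero n] {α β : Fin n → ZMod 4}
    (h : bhAdj n β α) : bhAdj n β (bhShadow n α) := by
  obtain ⟨i, ε, hε, rfl⟩ := h
  refine ⟨i, -ε, ?_, bhShadow_move n i ε hε β⟩
  rcases hε with rfl | rfl
  · right; rfl
  · left; decide

lemma bhShadow_ne {n : ℕ} [NeZero n] {α β : Fin n → ZMod 4}
    (h : bhAdj n α β ∨ bhAdj n β α) : bhShadow n α ≠ β := by
  have h0 : bhShadow n α 0 = α 0 + 2 := by simp [bhShadow]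
  rcases h with ⟨i, ε, hε, rfl⟩ | ⟨i, ε, hε, hm⟩
  · intro hc
    have hx := congrFun hc 0
    rw [h0, bhMove_apply_zero] at hx
    have h2 : (2 : ZMod 4) = ε := by
      have := add_left_cancel hx
      exact this
    rcases hε with rfl | rfl <;> exact absurd h2 (by decide)
  · intro hc
    have hx := congrFun hc 0
    rw [h0, hm, bhMove_apply_zero] at hx
    have h2 : ε + 2 = 0 := by
      have : β 0 + (ε + 2) = β 0 + 0 := by rw [add_zero, ← add_assoc]; exact hx
      exact add_left_cancel this
    rcases hε with rfl | rfl <;> exact absurd h2 (by decide)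

/-- A vertex `α` of `BH_n` and its shadow vertex `α^s` have exactly the same
set of neighbours: `N(α) = N(α^s)`. -/
theorem bh_shadow_same_neighborhood (n : ℕ) [NeZero n] (α : Fin n → ZMod 4) :
    (BH n).neighborSet α = (BH n).neighborSet (bhShadow n α) := by
  ext β
  simp only [SimpleGraph.mem_neighborSet, BH, SimpleGraph.fromRel_adj]
  constructor
  · rintro ⟨hne, h⟩
    refine ⟨bhShadow_ne h, ?_⟩
    rcases h with h | h
    · exact Or.inl (bhAdj_shadow_left h)
    · exact Or.inr (bhAdj_shadow_right h)
  · rintro ⟨hne, h⟩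
    constructor
    · have := bhShadow_ne h
      rwa [bhShadow_shadow] at this
    · rcases h with h | h
      · have := bhAdj_shadow_left h
        rw [bhShadow_shadow] at this
        exact Or.inl this
      · have := bhAdj_shadow_right h
        rw [bhShadow_shadow] at this
        exact Or.inr this
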